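/- Let m ≥ 2 be even and s_{j,i} be defined by binomial(km+1,j) = Σ_i s_{j,i}·binomial(k,i). Then for every i ≥ 1, m^i/2 divides s_{i+1,i}. -/

import Mathlib

open Finset Function

private lemma diffF (m c : ℕ) :
    fwdDiff 1 (fun k : ℕ => ((k * m + 1).choose c : ℤ)) =
    fun k : ℕ => ∑ a ∈ Finset.range c,
      (m.choose (a + 1) : ℤ) * ((k * m + 1).choose (c - (a + 1)) : ℤ) := by
  funext k
  have hv := Nat.add_choose_eq m (k * m + 1) c
  rw [Finset.Nat.sum_antidiagonal_eq_sum_range_succ_mk] at hv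
  have h1 : (k + 1) * m + 1 = m + (k * m + 1) := by ring
  have hv' : (((k + 1) * m + 1).choose c : ℤ)
      = ∑ a ∈ Finset.range (c + 1), (m.choose a : ℤ) * ((k * m + 1).choose (c - a) : ℤ) := by
    rw [h1, hv]; push_cast; rfl
  show (((k + 1) * m + 1).choose c : ℤ) - ((k * m + 1).choose c : ℤ) = _
  rw [hv', Finset.sum_range_succ']
  simp

private lemma diffF_succ (m n c : ℕ) :
    (fwdDiff 1)^[n + 1] (fun k : ℕ => ((k * m + 1).choose c : ℤ)) 0
    = ∑ a ∈ Finset.range c, (m.choose (a + 1) : ℤ) *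
        ((fwdDiff 1)^[n] (fun k : ℕ => ((k * m + 1).choose (c - (a + 1)) : ℤ)) 0) := by
  rw [Function.iterate_succ_apply, diffF]
  have h2 : (fun k : ℕ => ∑ a ∈ Finset.range c,
      (m.choose (a + 1) : ℤ) * ((k * m + 1).choose (c - (a + 1)) : ℤ))
      = ∑ a ∈ Finset.range c, (m.choose (a + 1) : ℤ) •
        (fun k : ℕ => ((k * m + 1).choose (c - (a + 1)) : ℤ)) := by
    funext k
    simp [Finset.sum_apply, smul_eq_mul]
  rw [h2, fwdDiff_iter_finset_sum, Finset.sum_apply]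
  refine Finset.sum_congr rfl fun a _ => ?_
  rw [fwdDiff_iter_const_smul, Pi.smul_apply, smul_eq_mul]

private lemma G_lt (m : ℕ) : ∀ n c : ℕ, c < n →
    (fwdDiff 1)^[n] (fun k : ℕ => ((k * m + 1).choose c : ℤ)) 0 = 0 := by
  intro n
  induction n with
  | zero => intro c hc; omega
  | succ n ih =>
    intro c hc
    rw [diffF_succ]
    refine Finset.sum_eq_zero fun a ha => ?_
    rw [Finset.mem_range] at ha
    rw [ih (c - (a + 1)) (by omega), mul_zero]

private lemma G_diag (m : ℕ) : ∀ n : ℕ,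
    (fwdDiff 1)^[n] (fun k : ℕ => ((k * m + 1).choose n : ℤ)) 0 = (m : ℤ) ^ n := by
  intro n
  induction n with
  | zero => simp
  | succ n ih =>
    rw [diffF_succ, Finset.sum_range_succ']
    have h0 : ∀ a ∈ Finset.range n, (m.choose (a + 1 + 1) : ℤ) *
        ((fwdDiff 1)^[n] (fun k : ℕ => ((k * m + 1).choose (n + 1 - (a + 1 + 1)) : ℤ)) 0) = 0 := by
      intro a ha
      rw [Finset.mem_range] at ha
      rw [G_lt m n _ (by omega), mul_zero]
    rw [Finset.sum_congr rfl h0, Finset.sum_const_zero, zero_add, zero_add,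
      Nat.add_sub_cancel, Nat.choose_one_right, ih]
    ring

private lemma G_top (m : ℕ) : ∀ n : ℕ,
    (fwdDiff 1)^[n] (fun k : ℕ => ((k * m + 1).choose (n + 1) : ℤ)) 0
      = (m : ℤ) ^ n + n * (m.choose 2 : ℤ) * (m : ℤ) ^ (n - 1) := by
  intro n
  induction n with
  | zero => simp
  | succ n ih =>
    rw [diffF_succ, Finset.sum_range_succ', Finset.sum_range_succ']
    have h0 : ∀ a ∈ Finset.range n, (m.choose (a + 1 + 1 + 1) : ℤ) *
        ((fwdDiff 1)^[n] (fun k : ℕ => ((k * m + 1).choose (n + 1 + 1 - (a + 1 + 1 + 1)) : ℤ)) 0)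
        = 0 := by
      intro a ha
      rw [Finset.mem_range] at ha
      rw [G_lt m n _ (by omega), mul_zero]
    rw [Finset.sum_congr rfl h0, Finset.sum_const_zero, zero_add]
    simp only [zero_add]
    have e1 : n + 1 + 1 - 2 = n := by omega
    have e2 : n + 1 + 1 - 1 = n + 1 := by omega
    rw [e1, e2, G_diag m n, ih, Nat.choose_one_right]
    cases n with
    | zero => norm_num; ring
    | succ n =>
      simp only [Nat.add_sub_cancel]
      push_cast
      ring

theorem stmt_7 (m : ℕ) (hm : 2 ≤ m) (heven : Even m) (s : ℕ → ℕ → ℤ)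
    (hs : ∀ j k : ℕ, ((k * m + 1).choose j : ℤ) =
      ∑ i ∈ Finset.range (j + 1), s j i * (k.choose i : ℤ))
    (i : ℕ) (hi : 1 ≤ i) : ((m : ℤ) ^ i / 2) ∣ s (i + 1) i := by
  -- Step 1: identify s (i+1) i as the i-th forward difference at 0
  have hF : (fun k : ℕ => ((k * m + 1).choose (i + 1) : ℤ))
      = ∑ i' ∈ Finset.range (i + 2), s (i + 1) i' • (fun k : ℕ => (k.choose i' : ℤ)) := by
    funext k
    rw [Finset.sum_apply]
    simpa [smul_eq_mul] using hs (i + 1) k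
  have hval : (fwdDiff 1)^[i] (fun k : ℕ => ((k * m + 1).choose (i + 1) : ℤ)) 0 = s (i + 1) i := by
    rw [hF, fwdDiff_iter_finset_sum, Finset.sum_apply]
    have hterm : ∀ i' ∈ Finset.range (i + 2),
        ((fwdDiff 1)^[i] (s (i + 1) i' • fun k : ℕ => (k.choose i' : ℤ))) 0
        = if i' = i then s (i + 1) i' else 0 := by
      intro i' _
      rw [fwdDiff_iter_const_smul, Pi.smul_apply, fwdDiff_iter_choose_zero, smul_eq_mul]
      by_cases h : i = i'
      · simp [h]
      · simp [h, Ne.symm h]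
    rw [Finset.sum_congr rfl hterm, Finset.sum_ite_eq' (Finset.range (i + 2)) i]
    simp
  rw [G_top m i] at hval
  -- Step 2: algebra
  obtain ⟨t, ht⟩ := heven
  have hm2 : m = 2 * t := by omega
  obtain ⟨j, rfl⟩ : ∃ j, i = j + 1 := ⟨i - 1, by omega⟩
  have hc2 : (m.choose 2 : ℤ) = (t : ℤ) * ((m : ℤ) - 1) := by
    have : m.choose 2 = t * (m - 1) := by
      rw [Nat.choose_two_right, hm2, mul_assoc, Nat.mul_div_cancel_left _ (by norm_num)]
    rw [this]
    push_cast [Nat.cast_sub (by omega : 1 ≤ m)]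
    ring
  have hd : ((m : ℤ) ^ (j + 1)) / 2 = (t : ℤ) * (m : ℤ) ^ j := by
    have hpow : (m : ℤ) ^ (j + 1) = 2 * ((t : ℤ) * (m : ℤ) ^ j) := by
      rw [pow_succ']
      have : (m : ℤ) = 2 * t := by exact_mod_cast hm2
      rw [this]; ring
    rw [hpow, Int.mul_ediv_cancel_left _ (by norm_num)]
  rw [hd]
  refine ⟨2 + (j + 1) * ((m : ℤ) - 1), ?_⟩
  rw [← hval]
  simp only [Nat.add_sub_cancel]
  rw [hc2]
  have : (m : ℤ) ^ (j + 1) = 2 * ((t : ℤ) * (m : ℤ) ^ j) := by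
    rw [pow_succ']
    have h2 : (m : ℤ) = 2 * t := by exact_mod_cast hm2
    rw [h2]; ring
  rw [this]
  push_cast
  ring
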